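/- Let O be a Dedekind domain, μ a non-principal ideal with μ² = (z), and let ε(1) ∈ O, ε_X ∈ μ, t ∈ O. Suppose there exist c ∈ O, d ∈ μ, d' ∈ O satisfying: c·ε(1) + z⁻¹·d·ε_X = 1, c·ε_X = −d·t, d'·ε_X = −d·ε(1), and z⁻¹·d·ε_X + d'·t = 1 (all equations in the fraction field K). Then ε(1) ≠ 0, t ≠ 0, c ≠ 0, and d' ≠ 0. -/

import Mathlib

/-- Nonvanishing of parameters: for a non-principal ideal `μ` with `μ² = (z)` in a
Dedekind domain, if `c ∈ O`, `d ∈ μ`, `d' ∈ O` satisfy the four trace equations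
(in the fraction field `K`), then `ε(1) ≠ 0`, `t ≠ 0`, `c ≠ 0` and `d' ≠ 0`. -/
theorem stmt4 (O : Type*) [CommRing O] [IsDomain O] [IsDedekindDomain O]
    (K : Type*) [Field K] [Algebra O K] [IsFractionRing O K]
    (μ : Ideal O) (hnp : ¬ Submodule.IsPrincipal μ)
    (z : O) (hz : z ≠ 0) (hsq : μ * μ = Ideal.span {z})
    (ε1 t c d' εX d : O) (hεX : εX ∈ μ) (hd : d ∈ μ)
    (h1 : algebraMap O K c * algebraMap O K ε1 +
        (algebraMap O K z)⁻¹ * algebraMap O K d * algebraMap O K εX = 1)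
    (h2 : algebraMap O K c * algebraMap O K εX = -(algebraMap O K d * algebraMap O K t))
    (h3 : algebraMap O K d' * algebraMap O K εX = -(algebraMap O K d * algebraMap O K ε1))
    (h4 : (algebraMap O K z)⁻¹ * algebraMap O K d * algebraMap O K εX +
        algebraMap O K d' * algebraMap O K t = 1) :
    ε1 ≠ 0 ∧ t ≠ 0 ∧ c ≠ 0 ∧ d' ≠ 0 := by
  have inj := IsFractionRing.injective O K
  have hzK : algebraMap O K z ≠ 0 := by
    simpa using (map_ne_zero_iff _ inj).mpr hz
  -- key: d * εX ≠ z, else μ would be principal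
  have key : d * εX ≠ z := by
    intro hde
    have hspan : μ * μ = Ideal.span {d} * Ideal.span {εX} := by
      rw [hsq, Ideal.span_singleton_mul_span_singleton, hde]
    obtain ⟨A, hAe⟩ := (Ideal.dvd_iff_le).mpr ((Ideal.span_singleton_le_iff_mem μ).mpr hd)
    obtain ⟨B, hBe⟩ := (Ideal.dvd_iff_le).mpr ((Ideal.span_singleton_le_iff_mem μ).mpr hεX)
    have hμμ : μ * μ ≠ 0 := by
      rw [hsq]
      simpa [Ideal.span_singleton_eq_bot] using hz
    have hAB : A * B = 1 := by
      apply mul_left_cancel₀ hμμ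
      rw [mul_one]
      calc μ * μ * (A * B) = (μ * A) * (μ * B) := by ring
        _ = μ * μ := by rw [← hAe, ← hBe, ← hspan]
    have hAtop : A = ⊤ := Ideal.isUnit_iff.mp (IsUnit.of_mul_eq_one (a := A) B hAB)
    exact hnp ⟨⟨d, by rw [show Submodule.span O {d} = Ideal.span {d} from rfl, hAe, hAtop, Ideal.mul_top]⟩⟩
  -- if z⁻¹ d εX = 1 in K, then d * εX = z
  have reduce : (algebraMap O K z)⁻¹ * algebraMap O K d * algebraMap O K εX = 1 →
      d * εX = z := by
    intro h
    apply inj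
    rw [map_mul]
    field_simp at h
    linear_combination h
  refine ⟨?_, ?_, ?_, ?_⟩
  · rintro rfl
    simp only [map_zero, mul_zero, zero_add] at h1
    exact key (reduce h1)
  · rintro rfl
    simp only [map_zero, mul_zero, add_zero] at h4
    exact key (reduce h4)
  · rintro rfl
    simp only [map_zero, zero_mul, zero_add] at h1
    exact key (reduce h1)
  · rintro rfl
    simp only [map_zero, zero_mul, add_zero] at h4
    exact key (reduce h4)
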